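/- arXiv:1302.7028 — 3 statements merged into one kernel-verified Lean document; each statement's English description precedes it below -/
import Mathlib

section
/- For any edge e = st in a graph G with positive edge weights, fix for each pair of vertices i,j a shortest path P_{ij}. Then the graph H on V(G) whose edges are the pairs {i,j} such that P_{ij} uses the edge e is bipartite. -/
/-- Fix an edge `e = st` of weight `w > 0` in a positively weighted graph, with
shortest-path distance `dist` (symmetric, satisfying the triangle inequality, and
with `dist s t ≤ w` since `st` is an edge).  For each pair `i, j` a fixed shortest
`i`-`j` path `P i j` either avoids `e` or traverses it in one of the two directions,
in which case its length decomposes as `dist i s + w + dist t j` (resp. the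
reverse); `uses i j` records that `P i j` uses `e`.  Then the graph `H` on the
vertices whose edges are the pairs `{i,j}` with `e ∈ P i j` is bipartite. -/
theorem shortest_path_edge_graph_bipartite {V : Type*}
    (dist : V → V → ℝ)
    (hsymm : ∀ x y, dist x y = dist y x)
    (htri : ∀ x y z, dist x z ≤ dist x y + dist y z)
    (s t : V) (w : ℝ) (hw : 0 < w) (hst : dist s t ≤ w)
    (uses : V → V → Prop)
    (huses : ∀ i j, uses i j →
      dist i s + w + dist t j = dist i j ∨ dist i t + w + dist s j = dist i j) :
    (SimpleGraph.fromRel uses).Colorable 2 := by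
  classical
  have key : ∀ i j, uses i j → (dist i s < dist i t ∧ dist j t < dist j s) ∨
      (dist i t < dist i s ∧ dist j s < dist j t) := by
    intro i j h
    rcases huses i j h with h1 | h1
    · left
      constructor
      · have := htri i t j
        nlinarith [hsymm t j]
      · have := htri i s j
        nlinarith [hsymm t j, hsymm s j]
    · right
      constructor
      · have := htri i s j
        nlinarith [hsymm s j]
      · have := htri i t j
        nlinarith [hsymm s j, hsymm t j]
  refine ⟨⟨fun x => if dist x s < dist x t then 0 else 1, ?_⟩⟩
  intro a b hab
  rcases hab with ⟨hne, h | h⟩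
  · rcases key a b h with ⟨h1, h2⟩ | ⟨h1, h2⟩
    · simp [h1, not_lt.2 h2.le]
    · simp [not_lt.2 h1.le, h2]
  · rcases key b a h with ⟨h1, h2⟩ | ⟨h1, h2⟩
    · simp [h1, not_lt.2 h2.le]
    · simp [not_lt.2 h1.le, h2]
end

section
/- Let T be a tree whose leaves are the vertices of a d-regular graph G on n vertices that is an α-edge-expander, and let c be a leaf-center of T. Then the number of edges of G whose endpoints lie in different components of T \ {c} is at least αn/2. -/
/-- Let `G` be a `d`-regular `α`-edge-expander on `n` vertices and let `T` be a
tree whose leaves are the vertices of `G`, with leaf-center `c`.  The components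
of `T \ {c}` induce a partition of the vertices of `G`, recorded by `comp`, in
which every part contains at most `n/2` vertices (the leaf-center property).
Then the number of edges of `G` whose endpoints lie in different components is
at least `α n / 2`. -/
theorem separated_edges_lower_bound {V : Type*} [Fintype V]
    (G : SimpleGraph V) (d : ℕ) (hreg : ∀ w, (G.neighborSet w).ncard = d)
    (n : ℕ) (hn : n = Fintype.card V) (α : ℝ) (hα : 0 < α)
    (hexp : ∀ S : Set V, 2 * S.ncard ≤ n →
      α * S.ncard ≤ ({e | e ∈ G.edgeSet ∧ ∃ x ∈ S, ∃ y ∈ Sᶜ, e = s(x, y)} : Set (Sym2 V)).ncard)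
    {ι : Type*} (comp : V → ι)
    (hcenter : ∀ k : ι, 2 * {v | comp v = k}.ncard ≤ n) :
    α * n / 2 ≤
      ({e | e ∈ G.edgeSet ∧ ∀ x y, e = s(x, y) → comp x ≠ comp y} : Set (Sym2 V)).ncard := by
  classical
  -- Finset versions
  set E : Finset (Sym2 V) :=
    Finset.univ.filter (fun e => e ∈ G.edgeSet ∧ ∀ x y, e = s(x, y) → comp x ≠ comp y) with hE
  set K : Finset ι := Finset.image comp Finset.univ with hK
  set Sfin : ι → Finset V := fun k => Finset.univ.filter (fun v => comp v = k) with hSfin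
  set Efin : ι → Finset (Sym2 V) := fun k =>
    Finset.univ.filter (fun e => e ∈ G.edgeSet ∧
      ∃ x ∈ ({v | comp v = k} : Set V), ∃ y ∈ ({v | comp v = k} : Set V)ᶜ, e = s(x, y)) with hEfin
  -- rewrite the goal's ncard
  have hgoal : ({e | e ∈ G.edgeSet ∧ ∀ x y, e = s(x, y) → comp x ≠ comp y} : Set (Sym2 V)).ncard
      = E.card := by
    rw [Set.ncard_eq_toFinset_card', Set.toFinset_setOf]
  rw [hgoal]
  -- expansion per component
  have hk : ∀ k : ι, α * (Sfin k).card ≤ (Efin k).card := by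
    intro k
    have h1 := hexp {v | comp v = k} (hcenter k)
    have h2 : ({v | comp v = k} : Set V).ncard = (Sfin k).card := by
      rw [Set.ncard_eq_toFinset_card', Set.toFinset_setOf]
    have h3 : ({e | e ∈ G.edgeSet ∧ ∃ x ∈ ({v | comp v = k} : Set V),
        ∃ y ∈ ({v | comp v = k} : Set V)ᶜ, e = s(x, y)} : Set (Sym2 V)).ncard
        = (Efin k).card := by
      rw [Set.ncard_eq_toFinset_card', Set.toFinset_setOf]
    rw [h2, h3] at h1
    exact h1
  -- each Efin k is contained in E
  have hsub : ∀ k, Efin k ⊆ E := by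
    intro k e he
    simp only [hEfin, Finset.mem_filter, Finset.mem_univ, true_and] at he
    obtain ⟨hedge, x, hx, y, hy, rfl⟩ := he
    simp only [Set.mem_setOf_eq] at hx
    simp only [Set.mem_compl_iff, Set.mem_setOf_eq] at hy
    simp only [hE, Finset.mem_filter, Finset.mem_univ, true_and]
    refine ⟨hedge, ?_⟩
    intro x' y' hxy
    rw [Sym2.eq_iff] at hxy
    rcases hxy with ⟨rfl, rfl⟩ | ⟨rfl, rfl⟩
    · rw [hx]; exact fun h => hy h.symm
    · rw [hx]; exact fun h => hy h
  -- counting: sum of |Efin k| over K ≤ 2 |E|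
  have hcount : ∑ k ∈ K, (Efin k).card ≤ 2 * E.card := by
    have h1 : ∀ k, (Efin k).card = ∑ e ∈ E, (if e ∈ Efin k then 1 else 0) := by
      intro k
      rw [← Finset.card_filter]
      congr 1
      ext e
      simp only [Finset.mem_filter]
      exact ⟨fun he => ⟨hsub k he, he⟩, fun h => h.2⟩
    calc ∑ k ∈ K, (Efin k).card
        = ∑ k ∈ K, ∑ e ∈ E, (if e ∈ Efin k then 1 else 0) := by
          exact Finset.sum_congr rfl fun k _ => h1 k
      _ = ∑ e ∈ E, ∑ k ∈ K, (if e ∈ Efin k then 1 else 0) := Finset.sum_comm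
      _ ≤ ∑ e ∈ E, 2 := by
          apply Finset.sum_le_sum
          intro e heE
          simp only [hE, Finset.mem_filter, Finset.mem_univ, true_and] at heE
          obtain ⟨hedge, _⟩ := heE
          induction e with
          | h x y =>
            rw [← Finset.card_filter]
            have hss : K.filter (fun k => s(x, y) ∈ Efin k) ⊆ {comp x, comp y} := by
              intro k hk'
              simp only [Finset.mem_filter] at hk'
              obtain ⟨-, hk'⟩ := hk'
              simp only [hEfin, Finset.mem_filter, Finset.mem_univ, true_and] at hk'
              obtain ⟨-, x', hx', y', hy', hxy⟩ := hk'
              simp only [Set.mem_setOf_eq] at hx'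
              rw [Sym2.eq_iff] at hxy
              rcases hxy with ⟨rfl, rfl⟩ | ⟨rfl, rfl⟩
              · simp [hx']
              · simp [hx']
            calc (K.filter (fun k => s(x, y) ∈ Efin k)).card
                ≤ ({comp x, comp y} : Finset ι).card := Finset.card_le_card hss
              _ ≤ 2 := Finset.card_insert_le _ _ |>.trans (by simp)
      _ = 2 * E.card := by rw [Finset.sum_const, smul_eq_mul, mul_comm]
  -- partition: sum of |Sfin k| = n
  have hpart : ∑ k ∈ K, (Sfin k).card = n := by
    rw [hn]
    rw [← Finset.card_univ]
    exact (Finset.card_eq_sum_card_fiberwise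
      (fun x _ => Finset.mem_image_of_mem comp (Finset.mem_univ x))).symm
  -- put everything together over ℝ
  have hmain : α * n ≤ 2 * E.card := by
    calc α * n = α * ∑ k ∈ K, ((Sfin k).card : ℝ) := by
          rw [← hpart]; push_cast; ring
      _ = ∑ k ∈ K, α * ((Sfin k).card : ℝ) := Finset.mul_sum _ _ _
      _ ≤ ∑ k ∈ K, ((Efin k).card : ℝ) := Finset.sum_le_sum fun k _ => hk k
      _ = ((∑ k ∈ K, (Efin k).card : ℕ) : ℝ) := by push_cast; ring
      _ ≤ ((2 * E.card : ℕ) : ℝ) := by exact_mod_cast hcount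
      _ = 2 * E.card := by push_cast; ring
  linarith
end

section
/- For every instance of robust network design, the optimal cost restricted to hierarchical hub templates is at most the optimal cost restricted to tree templates: RND_HH(G,c,D) ≤ RND_TR(G,c,D). -/
/-- `sep T x y a b` means the tree edge `xy` lies on the (unique) path between
`a` and `b` in `T`. -/
def sep {W : Type*} (T : SimpleGraph W) (x y a b : W) : Prop :=
  ∃ p : T.Walk a b, p.IsPath ∧ s(x, y) ∈ p.edges

open Classical in
/-- `cutLoad 𝒟 T ι x y = u_{𝒟,T}(xy)`: the maximum, over demand matrices in the
universe `𝒟`, of the total demand separated by the fundamental cut of the tree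
edge `xy` (terminals embedded via `ι`). -/
noncomputable def cutLoad {V W : Type*} [Fintype V] (𝒟 : Set (V → V → ℝ))
    (T : SimpleGraph W) (ι : V → W) (x y : W) : ℝ :=
  sSup {z | ∃ D ∈ 𝒟, z = ∑ i, ∑ j, if sep T x y (ι i) (ι j) then D i j else 0}

open Classical in
/-- The cost of the hierarchical hub template given by hub tree `T` and hub map
`η`: `∑_{e = xy ∈ T} u_{𝒟,T}(e) · dist_G(η x, η y)` (each edge counted once,
whence the factor `1/2`). -/
noncomputable def hhCost {V W : Type*} [Fintype V] [Fintype W]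
    (𝒟 : Set (V → V → ℝ)) (T : SimpleGraph W) (ι : V → W) (dG : V → V → ℝ)
    (η : W → V) : ℝ :=
  (1 / 2) * ∑ x, ∑ y,
    if T.Adj x y then cutLoad 𝒟 T ι x y * dG (η x) (η y) else 0

open SimpleGraph

variable {V : Type}

/-- The graph obtained from `G` by attaching a pendant leaf `inr v` to every vertex `inl v`. -/
def pend (G : SimpleGraph V) : SimpleGraph (V ⊕ V) where
  Adj x y :=
    match x, y with
    | Sum.inl a, Sum.inl b => G.Adj a b
    | Sum.inl a, Sum.inr b => a = b
    | Sum.inr a, Sum.inl b => a = b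
    | Sum.inr _, Sum.inr _ => False
  symm := ⟨by rintro (a | a) (b | b) h <;> first | exact h.symm | exact h.symm | exact h⟩
  loopless := ⟨by rintro (a | a) h <;> simp_all⟩

@[simp] lemma pend_adj_inl_inl {G : SimpleGraph V} {a b : V} :
    (pend G).Adj (Sum.inl a) (Sum.inl b) ↔ G.Adj a b := Iff.rfl
@[simp] lemma pend_adj_inl_inr {G : SimpleGraph V} {a b : V} :
    (pend G).Adj (Sum.inl a) (Sum.inr b) ↔ a = b := Iff.rfl
@[simp] lemma pend_adj_inr_inl {G : SimpleGraph V} {a b : V} :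
    (pend G).Adj (Sum.inr a) (Sum.inl b) ↔ a = b := Iff.rfl
@[simp] lemma pend_adj_inr_inr {G : SimpleGraph V} {a b : V} :
    ¬ (pend G).Adj (Sum.inr a) (Sum.inr b) := fun h => h

/-- `Sum.inl` as a graph homomorphism `G →g pend G`. -/
def pendHom (G : SimpleGraph V) : G →g pend G := ⟨Sum.inl, fun h => h⟩

@[simp] lemma pendHom_apply (G : SimpleGraph V) (v : V) : pendHom G v = Sum.inl v := rfl

open SimpleGraph.Walk in
/-- In `pend G`, a pendant vertex on a path must be one of the endpoints. -/
lemma pend_supp {G : SimpleGraph V} {x y : V ⊕ V} {q : (pend G).Walk x y}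
    (hq : q.IsPath) {v : V} (hv : Sum.inr v ∈ q.support) :
    Sum.inr v = x ∨ Sum.inr v = y := by
  classical
  by_contra hcon
  push_neg at hcon
  obtain ⟨hx, hy⟩ := hcon
  set q1 := q.takeUntil _ hv with hq1
  set q2 := q.dropUntil _ hv with hq2
  have hspec : q1.append q2 = q := q.take_spec hv
  -- second vertex of q2 is inl v
  have h2 : Sum.inl v ∈ q2.support.tail := by
    have hnn : ¬ q2.Nil := not_nil_of_ne (fun h => hy h)
    obtain ⟨u, h, r, hr⟩ := not_nil_iff.mp hnn
    obtain (c | c) := u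
    · have hvc : v = c := h
      subst hvc
      rw [hr]
      simp
    · exact absurd h (pend_adj_inr_inr)
  -- the vertex before inr v in q1 is inl v
  have h1 : Sum.inl v ∈ q1.support := by
    have hnn : ¬ q1.reverse.Nil := not_nil_of_ne hx
    obtain ⟨u, h, r, hr⟩ := not_nil_iff.mp hnn
    obtain (c | c) := u
    · have hvc : v = c := h
      subst hvc
      have : Sum.inl v ∈ q1.reverse.support := by rw [hr]; simp
      rwa [support_reverse, List.mem_reverse] at this
    · exact absurd h (pend_adj_inr_inr)
  have nd : (q1.support ++ q2.support.tail).Nodup := by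
    rw [← support_append, hspec]
    exact hq.support_nodup
  exact List.disjoint_of_nodup_append nd h1 h2

open SimpleGraph.Walk in
lemma pend_noInr {G : SimpleGraph V} {a b : V}
    {q : (pend G).Walk (Sum.inl a) (Sum.inl b)} (hq : q.IsPath) (v : V) :
    Sum.inr v ∉ q.support := by
  intro hv
  rcases pend_supp hq hv with h | h <;> simp at h

open SimpleGraph.Walk in
/-- A walk in `pend G` avoiding all pendant vertices is the image of a walk in `G`. -/
lemma pend_proj {G : SimpleGraph V} {x y : V ⊕ V} (q : (pend G).Walk x y)
    (hsup : ∀ v, Sum.inr v ∉ q.support) :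
    ∀ a b (hxa : x = Sum.inl a) (hyb : y = Sum.inl b),
      ∃ p0 : G.Walk a b, q.copy hxa hyb = p0.map (pendHom G) := by
  induction q with
  | nil =>
    intro a b hxa hyb
    subst hxa
    obtain rfl : a = b := by injection hyb
    exact ⟨Walk.nil, by simp⟩
  | @cons u z w h q ih =>
    intro a b hxa hyb
    subst hxa
    subst hyb
    obtain (c | c) := z
    · have hs' : ∀ v, Sum.inr v ∉ q.support := by
        intro v hv
        exact hsup v (by simp [hv])
      obtain ⟨p0, hp0⟩ := ih hs' c b rfl rfl
      rw [Walk.copy_rfl_rfl] at hp0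
      have h' : G.Adj a c := h
      refine ⟨Walk.cons h' p0, ?_⟩
      rw [Walk.copy_rfl_rfl, Walk.map_cons, hp0]
      rfl
    · exact absurd (by simp : Sum.inr c ∈ (Walk.cons h q).support) (hsup c)

lemma existsUnique_path_reverse {X : Type*} {G : SimpleGraph X} {x y : X}
    (h : ∃! p : G.Walk x y, p.IsPath) : ∃! p : G.Walk y x, p.IsPath := by
  obtain ⟨p, hp, hu⟩ := h
  refine ⟨p.reverse, hp.reverse, fun q hq => ?_⟩
  rw [← q.reverse_reverse, hu q.reverse hq.reverse]

lemma pendHom_injective (G : SimpleGraph V) : Function.Injective (pendHom G) :=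
  fun u v h => by injection h

open SimpleGraph.Walk in
lemma pend_up_inl_inl {G : SimpleGraph V} (hG : G.IsTree) (a b : V) :
    ∃! q : (pend G).Walk (Sum.inl a) (Sum.inl b), q.IsPath := by
  obtain ⟨p, hp, hup⟩ := hG.existsUnique_path a b
  refine ⟨p.map (pendHom G), Walk.map_isPath_of_injective (pendHom_injective G) hp,
    fun q hq => ?_⟩
  obtain ⟨p0, hp0⟩ := pend_proj q (pend_noInr hq) a b rfl rfl
  rw [Walk.copy_rfl_rfl] at hp0
  have hq0 : p0.IsPath := by
    have := hq; rw [hp0] at this; exact this.of_map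
  rw [hp0, hup p0 hq0]

open SimpleGraph.Walk in
lemma pend_up_inl_inr {G : SimpleGraph V} (hG : G.IsTree) (a b : V) :
    ∃! q : (pend G).Walk (Sum.inl a) (Sum.inr b), q.IsPath := by
  obtain ⟨r, hr, hur⟩ := pend_up_inl_inl hG b a
  have hadj : (pend G).Adj (Sum.inr b) (Sum.inl b) := rfl
  have hbs : Sum.inr b ∉ r.support := pend_noInr hr b
  refine ⟨(Walk.cons hadj r).reverse,
    ((Walk.cons_isPath_iff _ _).mpr ⟨hr, hbs⟩).reverse, fun q hq => ?_⟩
  have hnn : ¬ q.reverse.Nil := not_nil_of_ne (by simp)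
  obtain ⟨u, h, r', hqr⟩ := not_nil_iff.mp hnn
  obtain (c | c) := u
  · obtain rfl : b = c := h
    have hr' : r'.IsPath := by
      have := hq.reverse; rw [hqr] at this; exact this.of_cons
    rw [← q.reverse_reverse, hqr, hur r' hr']
  · exact absurd h pend_adj_inr_inr

open SimpleGraph.Walk in
lemma pend_up_inr_inr {G : SimpleGraph V} (hG : G.IsTree) (a b : V) :
    ∃! q : (pend G).Walk (Sum.inr a) (Sum.inr b), q.IsPath := by
  by_cases hab : a = b
  · subst hab
    exact ⟨Walk.nil, Walk.IsPath.nil, fun q hq => (Walk.isPath_iff_eq_nil (p := q)).mp hq⟩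
  · obtain ⟨r, hr, hur⟩ := pend_up_inl_inr hG a b
    have hadj : (pend G).Adj (Sum.inr a) (Sum.inl a) := rfl
    have has : Sum.inr a ∉ r.support := by
      intro hs
      rcases pend_supp hr hs with h | h
      · simp at h
      · exact hab (by injection h)
    refine ⟨Walk.cons hadj r, (Walk.cons_isPath_iff _ _).mpr ⟨hr, has⟩, fun q hq => ?_⟩
    have hnn : ¬ q.Nil := not_nil_of_ne (by simp [hab])
    obtain ⟨u, h, r', hqr⟩ := not_nil_iff.mp hnn
    obtain (c | c) := u
    · obtain rfl : a = c := h
      have hr' : r'.IsPath := by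
        have := hq; rw [hqr] at this; exact this.of_cons
      rw [hqr, hur r' hr']
    · exact absurd h pend_adj_inr_inr

lemma pend_isTree {G : SimpleGraph V} [Nonempty V] (hG : G.IsTree) :
    (pend G).IsTree := by
  rw [SimpleGraph.isTree_iff_existsUnique_path]
  refine ⟨⟨Sum.inl Classical.ofNonempty⟩, ?_⟩
  rintro (a | a) (b | b)
  · exact pend_up_inl_inl hG a b
  · exact pend_up_inl_inr hG a b
  · exact existsUnique_path_reverse (pend_up_inl_inr hG b a)
  · exact pend_up_inr_inr hG a b

open SimpleGraph.Walk in
lemma pend_sep_iff {G : SimpleGraph V} (hG : G.IsTree) (x y i j : V) :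
    sep (pend G) (Sum.inl x) (Sum.inl y) (Sum.inr i) (Sum.inr j) ↔ sep G x y i j := by
  by_cases hij : i = j
  · subst hij
    constructor
    · rintro ⟨q, hq, he⟩
      rw [(Walk.isPath_iff_eq_nil (p := q)).mp hq] at he
      simp at he
    · rintro ⟨p, hp, he⟩
      rw [(Walk.isPath_iff_eq_nil (p := p)).mp hp] at he
      simp at he
  constructor
  · rintro ⟨q, hq, he⟩
    have hnn : ¬ q.Nil := not_nil_of_ne (by simp [hij])
    obtain ⟨u, h, r, hqr⟩ := not_nil_iff.mp hnn
    obtain (c | c) := u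
    swap
    · exact absurd h pend_adj_inr_inr
    have hic : i = c := h
    subst hic
    have hr : r.IsPath := by have := hq; rw [hqr] at this; exact this.of_cons
    have hnn' : ¬ r.reverse.Nil := not_nil_of_ne (by simp)
    obtain ⟨u', h', r'', hqr'⟩ := not_nil_iff.mp hnn'
    obtain (c | c) := u'
    swap
    · exact absurd h' pend_adj_inr_inr
    have hjc : j = c := h'
    subst hjc
    have hr'' : r''.IsPath := by
      have := hr.reverse; rw [hqr'] at this; exact this.of_cons
    obtain ⟨p0, hp0⟩ := pend_proj r'' (pend_noInr hr'') j i rfl rfl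
    rw [Walk.copy_rfl_rfl] at hp0
    have hp0p : p0.IsPath := by have := hr''; rw [hp0] at this; exact this.of_map
    -- locate the edge
    rw [hqr, Walk.edges_cons, List.mem_cons] at he
    rcases he with he | he
    · rw [Sym2.eq_iff] at he
      rcases he with ⟨h1, h2⟩ | ⟨h1, h2⟩ <;> simp at h1 h2
    have : s(Sum.inl x, Sum.inl y) ∈ r''.edges := by
      have hrr := congrArg Walk.reverse hqr'
      rw [Walk.reverse_reverse] at hrr
      rw [hrr, Walk.edges_reverse, List.mem_reverse, Walk.edges_cons, List.mem_cons] at he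
      rcases he with he | he
      · rw [Sym2.eq_iff] at he
        rcases he with ⟨h1, h2⟩ | ⟨h1, h2⟩ <;> simp at h1 h2
      · exact he
    rw [hp0] at this
    replace this : s(Sum.inl x, Sum.inl y) ∈ (p0.map (pendHom G)).edges := this
    rw [Walk.edges_map, List.mem_map] at this
    obtain ⟨e, hmem, hmap⟩ := this
    have : e = s(x, y) := by
      apply Sym2.map.injective (pendHom_injective G)
      rw [hmap, Sym2.map_pair_eq]
      rfl
    subst this
    exact ⟨p0.reverse, hp0p.reverse, by rw [Walk.edges_reverse, List.mem_reverse]; exact hmem⟩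
  · rintro ⟨p, hp, he⟩
    have hadji : (pend G).Adj (Sum.inr i) (Sum.inl i) := rfl
    have hadjj : (pend G).Adj (Sum.inr j) (Sum.inl j) := rfl
    set X : (pend G).Walk (Sum.inl j) (Sum.inl i) := (p.map (pendHom G)).reverse with hX
    have hXp : X.IsPath := (Walk.map_isPath_of_injective (pendHom_injective G) hp).reverse
    have hXsup : ∀ v, Sum.inr v ∉ X.support := pend_noInr hXp
    have hYp : (Walk.cons hadjj X).IsPath :=
      (Walk.cons_isPath_iff _ _).mpr ⟨hXp, hXsup j⟩
    have hZp : (Walk.cons hadji (Walk.cons hadjj X).reverse).IsPath := by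
      refine (Walk.cons_isPath_iff _ _).mpr ⟨hYp.reverse, ?_⟩
      rw [Walk.support_reverse, List.mem_reverse, Walk.support_cons, List.mem_cons]
      rintro (h1 | h1)
      · exact hij (by injection h1)
      · exact hXsup i h1
    refine ⟨Walk.cons hadji (Walk.cons hadjj X).reverse, hZp, ?_⟩
    have hme : s(Sum.inl x, Sum.inl y) ∈ X.edges := by
      have h0 : s(Sum.inl x, Sum.inl y) ∈ (p.map (pendHom G)).reverse.edges := by
        rw [Walk.edges_reverse, List.mem_reverse, Walk.edges_map]
        refine List.mem_map.mpr ⟨s(x, y), he, ?_⟩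
        rw [Sym2.map_pair_eq]
        rfl
      exact h0
    rw [Walk.edges_cons, Walk.edges_reverse, Walk.edges_cons]
    simp only [List.mem_cons, List.mem_reverse, List.mem_cons]
    exact Or.inr (Or.inr hme)

lemma pend_neighborSet_inr {G : SimpleGraph V} (a : V) :
    (pend G).neighborSet (Sum.inr a) = {Sum.inl a} := by
  ext (b | b)
  · simp only [SimpleGraph.mem_neighborSet, pend_adj_inr_inl, Set.mem_singleton_iff,
      Sum.inl.injEq]
    exact eq_comm
  · simp [SimpleGraph.mem_neighborSet]

/-- `RND_HH ≤ RND_TR`: for every tree-routing template, given by a tree `Ttr`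
on the nodes of the network (in its metric completion, with distances `dG`,
`dG v v = 0`), there is a hierarchical hub template — a hub tree `T` whose
leaves (degree-one vertices) are exactly the terminals `V`, embedded via `ι`,
together with a hub map `η` fixing the terminals — whose cost is at most the
cost of the tree template (the latter being the hub-tree cost of `Ttr` routed
by the identity). -/
theorem rnd_hh_le_rnd_tr {V : Type} [Fintype V] (hV : 2 ≤ Fintype.card V)
    (dG : V → V → ℝ) (hdG : ∀ v, dG v v = 0)
    (𝒟 : Set (V → V → ℝ)) (Ttr : SimpleGraph V) (hTtr : Ttr.IsTree) :
    ∃ (W : Type) (_ : Fintype W) (T : SimpleGraph W) (ι : V → W) (η : W → V),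
      T.IsTree ∧ Function.Injective ι ∧
      (∀ x : W, (∃ v, ι v = x) ↔ (T.neighborSet x).ncard = 1) ∧
      (∀ v, η (ι v) = v) ∧
      hhCost 𝒟 T ι dG η ≤ hhCost 𝒟 Ttr id dG id := by
  classical
  have hne : Nonempty V := Fintype.card_pos_iff.mp (by omega)
  refine ⟨V ⊕ V, inferInstance, pend Ttr, Sum.inr, Sum.elim id id,
    pend_isTree hTtr, fun u v h => by injection h, ?_, fun v => rfl, ?_⟩
  · rintro (a | a)
    · constructor
      · rintro ⟨v, hv⟩
        exact absurd hv (by simp)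
      · intro hcard
        obtain ⟨b, hb⟩ := Fintype.exists_ne_of_one_lt_card (by omega) a
        obtain ⟨c, hc⟩ : ∃ c, Ttr.Adj a c := by
          obtain ⟨w⟩ := hTtr.isConnected.preconnected a b
          obtain ⟨u, h, _, _⟩ := (SimpleGraph.Walk.not_nil_iff (p := w)).mp
            (SimpleGraph.Walk.not_nil_of_ne (p := w) (Ne.symm hb))
          exact ⟨u, h⟩
        have h1 : Sum.inl c ∈ (pend Ttr).neighborSet (Sum.inl a) := hc
        have h2 : Sum.inr a ∈ (pend Ttr).neighborSet (Sum.inl a) := rfl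
        have : 1 < ((pend Ttr).neighborSet (Sum.inl a)).ncard :=
          (Set.one_lt_ncard (Set.toFinite _)).mpr ⟨_, h1, _, h2, by simp⟩
        omega
    · refine iff_of_true ⟨a, rfl⟩ ?_
      rw [pend_neighborSet_inr]
      exact Set.ncard_singleton _
  · -- cost comparison: the two costs are equal
    have hcut : ∀ x y : V, cutLoad 𝒟 (pend Ttr) Sum.inr (Sum.inl x) (Sum.inl y) =
        cutLoad 𝒟 Ttr id x y := by
      intro x y
      unfold cutLoad
      congr 1
      ext z
      simp only [Set.mem_setOf_eq]
      constructor <;> rintro ⟨D, hD, rfl⟩ <;> refine ⟨D, hD, ?_⟩ <;>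
        refine Finset.sum_congr rfl fun i _ => Finset.sum_congr rfl fun j _ => ?_ <;>
        · simp only [id_eq]
          rw [if_congr (pend_sep_iff hTtr x y i j) rfl rfl]
    refine le_of_eq ?_
    unfold hhCost
    congr 1
    simp only [Fintype.sum_sum_type]
    have hzero1 : ∀ a : V, ∑ b : V, (if (pend Ttr).Adj (Sum.inl a) (Sum.inr b)
        then cutLoad 𝒟 (pend Ttr) Sum.inr (Sum.inl a) (Sum.inr b) *
          dG (Sum.elim id id (Sum.inl a)) (Sum.elim id id (Sum.inr b)) else 0) = 0 := by
      intro a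
      refine Finset.sum_eq_zero fun b _ => ?_
      by_cases h : a = b
      · subst h
        simp [hdG a]
      · simp [pend_adj_inl_inr, h]
    have hzero2 : ∀ a : V, ∑ b : V, (if (pend Ttr).Adj (Sum.inr a) (Sum.inl b)
        then cutLoad 𝒟 (pend Ttr) Sum.inr (Sum.inr a) (Sum.inl b) *
          dG (Sum.elim id id (Sum.inr a)) (Sum.elim id id (Sum.inl b)) else 0) = 0 := by
      intro a
      refine Finset.sum_eq_zero fun b _ => ?_
      by_cases h : a = b
      · subst h
        simp [hdG a]
      · simp [pend_adj_inr_inl, h]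
    have hzero3 : ∀ a : V, ∑ b : V, (if (pend Ttr).Adj (Sum.inr a) (Sum.inr b)
        then cutLoad 𝒟 (pend Ttr) Sum.inr (Sum.inr a) (Sum.inr b) *
          dG (Sum.elim id id (Sum.inr a)) (Sum.elim id id (Sum.inr b)) else 0) = 0 := by
      intro a
      exact Finset.sum_eq_zero fun b _ => by simp [pend_adj_inr_inr]
    simp only [hzero1, hzero2, hzero3, add_zero, zero_add, Finset.sum_const_zero]
    refine Finset.sum_congr rfl fun a _ => Finset.sum_congr rfl fun b _ => ?_
    simp only [Sum.elim_inl, id_eq]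
    rw [if_congr (Iff.rfl : (pend Ttr).Adj (Sum.inl a) (Sum.inl b) ↔ Ttr.Adj a b)
      (by rw [hcut a b]) rfl]
    rfl
end
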